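/- Let Λ, T > 0 be real numbers and let (a_n)_{n∈ℤ} be complex numbers with Σ_{n∈ℤ}|a_n| < ∞ and a_{−n} = −a_n for all n. Define F(x,t) = Σ_{n∈ℤ} a_n e(nx/(2Λ) − n²t/T). Then for every real x: (i) F(x, T/2) = −F(Λ−x, 0); (ii) F(x, T/4) = ((1−i)/2)·F(x,0) − ((1+i)/2)·F(Λ−x,0); (iii) F(x, T/8) = ((1−i)/(2√2))·F(x,0) + (1/2)·F(x+Λ/2, 0) + ((1−i)/(2√2))·F(Λ−x, 0) − (1/2)·F(Λ/2−x, 0). -/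

import Mathlib

noncomputable def e (x : ℝ) : ℂ := Complex.exp (2 * Real.pi * Complex.I * x)

noncomputable def F (a : ℤ → ℂ) (Λ T x t : ℝ) : ℂ :=
  ∑' n : ℤ, a n * e (n * x / (2 * Λ) - n ^ 2 * t / T)

open Complex

lemma e_add (u v : ℝ) : e (u + v) = e u * e v := by
  unfold e; rw [← Complex.exp_add]; push_cast; ring_nf

lemma e_zero : e 0 = 1 := by unfold e; simp

lemma e_neg (u : ℝ) : e (-u) = (e u)⁻¹ := by
  refine eq_inv_of_mul_eq_one_left ?_
  rw [← e_add]; simpa using e_zero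

lemma e_int (n : ℤ) : e n = 1 := by
  unfold e
  rw [show (2 * (Real.pi:ℂ) * Complex.I * (n:ℝ) : ℂ) = n * (2*Real.pi*Complex.I) by
    push_cast; ring]
  exact Complex.exp_int_mul_two_pi_mul_I n

lemma e_int_add (m : ℤ) (r : ℝ) : e (m + r) = e r := by
  rw [e_add, e_int, one_mul]

lemma e_zpow (n : ℤ) (r : ℝ) : e (n * r) = e r ^ n := by
  unfold e
  rw [← Complex.exp_int_mul]
  push_cast; ring_nf

lemma e_norm (r : ℝ) : ‖e r‖ = 1 := by
  unfold e
  rw [show (2 * (Real.pi:ℂ) * Complex.I * (r:ℝ) : ℂ) = (2*Real.pi*r : ℝ) * Complex.I by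
    push_cast; ring]
  exact Complex.norm_exp_ofReal_mul_I _

lemma e_abs (r : ℝ) : ‖e r‖ = 1 := e_norm r

lemma e_cos_sin (r : ℝ) :
    e r = (Real.cos (2*Real.pi*r) : ℂ) + (Real.sin (2*Real.pi*r) : ℂ) * Complex.I := by
  unfold e
  rw [show (2 * (Real.pi:ℂ) * Complex.I * (r:ℝ) : ℂ) = ((2*Real.pi*r : ℝ):ℂ) * Complex.I by
    push_cast; ring, Complex.exp_mul_I, ← Complex.ofReal_cos, ← Complex.ofReal_sin]

lemma e_half : e (1/2) = -1 := by
  have h := e_cos_sin (1/2)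
  rw [show 2*Real.pi*(1/2:ℝ) = Real.pi by ring] at h
  simpa [Real.cos_pi, Real.sin_pi] using h

lemma e_quarter : e (1/4) = Complex.I := by
  have h := e_cos_sin (1/4)
  rw [show 2*Real.pi*(1/4:ℝ) = Real.pi/2 by ring] at h
  simpa [Real.cos_pi_div_two, Real.sin_pi_div_two] using h

lemma e_neg_half : e (-(1/2)) = -1 := by
  rw [e_neg, e_half]; norm_num

lemma e_neg_quarter : e (-(1/4)) = -Complex.I := by
  rw [e_neg, e_quarter, Complex.inv_I]

lemma e_eighth : e (-(1/8)) = (1 - Complex.I) / Real.sqrt 2 := by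
  have h := e_cos_sin (-(1/8))
  rw [show 2*Real.pi*(-(1/8):ℝ) = -(Real.pi/4) by ring] at h
  rw [Real.cos_neg, Real.sin_neg, Real.cos_pi_div_four, Real.sin_pi_div_four] at h
  rw [h]
  have h2 : (Real.sqrt 2 : ℂ) ≠ 0 := by
    simpa using Real.sqrt_ne_zero'.mpr (by norm_num)
  have hs : (Real.sqrt 2 : ℂ) * Real.sqrt 2 = 2 := by
    rw [← Complex.ofReal_mul, Real.mul_self_sqrt (by norm_num)]; norm_num
  field_simp
  push_cast
  ring_nf
  rw [show ((Real.sqrt 2:ℂ))^2 = (Real.sqrt 2:ℂ) * Real.sqrt 2 by ring, hs]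
  ring

lemma zpow_per {u : ℂ} (hu : u ≠ 0) {k : ℤ} (h : u ^ k = 1) (q r : ℤ) :
    u ^ (k*q + r) = u ^ r := by
  rw [zpow_add₀ hu, zpow_mul, h, one_zpow, one_mul]

lemma neg_one_zp2 : ((-1:ℂ))^(2:ℤ) = 1 := by
  rw [show ((2:ℤ)) = ((2:ℕ):ℤ) from rfl, zpow_natCast]; norm_num

lemma neg_one_zp4 : ((-1:ℂ))^(4:ℤ) = 1 := by
  rw [show ((4:ℤ)) = ((4:ℕ):ℤ) from rfl, zpow_natCast]; norm_num

lemma I_zp4 : (Complex.I)^(4:ℤ) = 1 := by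
  rw [show ((4:ℤ)) = ((4:ℕ):ℤ) from rfl, zpow_natCast]; simp [pow_succ]

lemma negI_zp4 : (-Complex.I)^(4:ℤ) = 1 := by
  rw [show ((4:ℤ)) = ((4:ℕ):ℤ) from rfl, zpow_natCast]; simp [pow_succ]

lemma I_zp2 : (Complex.I)^(2:ℤ) = -1 := by
  rw [show ((2:ℤ)) = ((2:ℕ):ℤ) from rfl, zpow_natCast]; norm_num [pow_succ]

lemma negI_zp2 : (-Complex.I)^(2:ℤ) = -1 := by
  rw [show ((2:ℤ)) = ((2:ℕ):ℤ) from rfl, zpow_natCast]; norm_num [pow_succ]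

lemma I_zp3 : (Complex.I)^(3:ℤ) = -Complex.I := by
  rw [show ((3:ℤ)) = ((3:ℕ):ℤ) from rfl, zpow_natCast]; norm_num [pow_succ]

lemma negI_zp3 : (-Complex.I)^(3:ℤ) = Complex.I := by
  rw [show ((3:ℤ)) = ((3:ℕ):ℤ) from rfl, zpow_natCast]; norm_num [pow_succ]

lemma neg_one_zp3 : ((-1:ℂ))^(3:ℤ) = -1 := by
  rw [show ((3:ℤ)) = ((3:ℕ):ℤ) from rfl, zpow_natCast]; norm_num [pow_succ]

lemma neg_one_ne : (-1:ℂ) ≠ 0 := by norm_num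

lemma I_ne : (Complex.I:ℂ) ≠ 0 := Complex.I_ne_zero

lemma negI_ne : (-Complex.I:ℂ) ≠ 0 := by simpa using Complex.I_ne_zero

lemma mod2 (n : ℤ) : ∃ q r, 0 ≤ r ∧ r < 2 ∧ n = 2*q + r :=
  ⟨n/2, n%2, Int.emod_nonneg n (by norm_num), Int.emod_lt_of_pos n (by norm_num),
    (Int.mul_ediv_add_emod n 2).symm⟩

lemma mod4 (n : ℤ) : ∃ q r, 0 ≤ r ∧ r < 4 ∧ n = 4*q + r :=
  ⟨n/4, n%4, Int.emod_nonneg n (by norm_num), Int.emod_lt_of_pos n (by norm_num),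
    (Int.mul_ediv_add_emod n 4).symm⟩

lemma neg_one_zpow_sq (n : ℤ) : ((-1:ℂ))^(n^2) = (-1:ℂ)^n := by
  obtain ⟨q, r, hr0, hr2, rfl⟩ := mod2 n
  interval_cases r
  · rw [show (2*q+0)^2 = 2*(2*q^2) + 0 by ring, zpow_per neg_one_ne neg_one_zp2,
      zpow_per neg_one_ne neg_one_zp2]
  · rw [show (2*q+1)^2 = 2*(2*q^2+2*q) + 1 by ring, zpow_per neg_one_ne neg_one_zp2,
      zpow_per neg_one_ne neg_one_zp2]

lemma term4 (n : ℤ) :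
    e (-((n:ℝ)^2/4)) = (1 - Complex.I)/2 + (1 + Complex.I)/2 * (-1:ℂ)^n := by
  obtain ⟨q, r, hr0, hr2, rfl⟩ := mod2 n
  interval_cases r
  · rw [show -((((2*q+0:ℤ)):ℝ)^2/4) = ((-(q^2):ℤ):ℝ) by push_cast; ring, e_int,
      zpow_per neg_one_ne neg_one_zp2, zpow_zero]
    ring
  · rw [show -((((2*q+1:ℤ)):ℝ)^2/4) = ((-(q^2)-q-1:ℤ):ℝ) + (3/4:ℝ) by push_cast; ring,
      e_int_add, show (3/4:ℝ) = 1/2 + 1/4 by norm_num, e_add, e_half, e_quarter,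
      zpow_per neg_one_ne neg_one_zp2, zpow_one]
    ring

lemma term8 (n : ℤ) :
    e (-((n:ℝ)^2/8)) = (1 - Complex.I)/(2*Real.sqrt 2) + (1/2) * Complex.I^n
      - (1 - Complex.I)/(2*Real.sqrt 2) * (-1:ℂ)^n + (1/2) * (-Complex.I)^n := by
  have h2 : (Real.sqrt 2 : ℂ) ≠ 0 := by
    simpa using Real.sqrt_ne_zero'.mpr (by norm_num)
  obtain ⟨q, r, hr0, hr4, rfl⟩ := mod4 n
  interval_cases r
  · rw [show -((((4*q+0:ℤ)):ℝ)^2/8) = ((-(2*q^2):ℤ):ℝ) by push_cast; ring, e_int,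
      zpow_per neg_one_ne neg_one_zp4, zpow_per I_ne I_zp4, zpow_per negI_ne negI_zp4,
      zpow_zero, zpow_zero, zpow_zero]
    ring
  · rw [show -((((4*q+1:ℤ)):ℝ)^2/8) = ((-(2*q^2)-q-1:ℤ):ℝ) + (7/8:ℝ) by push_cast; ring,
      e_int_add, show (7/8:ℝ) = ((1:ℤ):ℝ) + (-(1/8)) by push_cast; norm_num,
      e_int_add, e_eighth,
      zpow_per neg_one_ne neg_one_zp4, zpow_per I_ne I_zp4, zpow_per negI_ne negI_zp4,
      zpow_one, zpow_one, zpow_one,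
      show (1 - Complex.I)/((Real.sqrt 2 : ℝ):ℂ)
          = (1 - Complex.I)/(2*((Real.sqrt 2 : ℝ):ℂ)) * 2 from by field_simp]
    ring
  · rw [show -((((4*q+2:ℤ)):ℝ)^2/8) = ((-(2*q^2)-2*q-1:ℤ):ℝ) + (1/2:ℝ) by push_cast; ring,
      e_int_add, e_half,
      zpow_per neg_one_ne neg_one_zp4, zpow_per I_ne I_zp4, zpow_per negI_ne negI_zp4,
      neg_one_zp2, I_zp2, negI_zp2]
    ring
  · rw [show -((((4*q+3:ℤ)):ℝ)^2/8) = ((-(2*q^2)-3*q-2:ℤ):ℝ) + (7/8:ℝ) by push_cast; ring,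
      e_int_add, show (7/8:ℝ) = ((1:ℤ):ℝ) + (-(1/8)) by push_cast; norm_num,
      e_int_add, e_eighth,
      zpow_per neg_one_ne neg_one_zp4, zpow_per I_ne I_zp4, zpow_per negI_ne negI_zp4,
      neg_one_zp3, I_zp3, negI_zp3,
      show (1 - Complex.I)/((Real.sqrt 2 : ℝ):ℂ)
          = (1 - Complex.I)/(2*((Real.sqrt 2 : ℝ):ℂ)) * 2 from by field_simp]
    ring

section Flemmas

variable (a : ℤ → ℂ) (Λ T y : ℝ)

lemma F_zero : F a Λ T y 0 = ∑' n : ℤ, a n * e ((n:ℝ) * y / (2*Λ)) := by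
  unfold F
  refine tsum_congr fun n => ?_
  norm_num

lemma F_refl (hΛ0 : Λ ≠ 0) (hodd : ∀ n : ℤ, a (-n) = -a n) :
    F a Λ T (Λ - y) 0 = -∑' n : ℤ, a n * ((-1:ℂ)^n * e ((n:ℝ) * y / (2*Λ))) := by
  unfold F
  rw [← (Equiv.neg ℤ).tsum_eq, ← tsum_neg]
  refine tsum_congr fun n => ?_
  simp only [Equiv.neg_apply]
  rw [hodd n,
    show ((-n:ℤ):ℝ) * (Λ - y) / (2*Λ) - ((-n:ℤ):ℝ)^2 * 0 / T
        = ((n:ℤ):ℝ) * (-(1/2)) + (n:ℝ) * y / (2*Λ) by push_cast; field_simp; ring,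
    e_add, e_zpow, e_neg_half]
  ring

lemma F_shift (hΛ0 : Λ ≠ 0) :
    F a Λ T (y + Λ/2) 0 = ∑' n : ℤ, a n * (Complex.I^n * e ((n:ℝ) * y / (2*Λ))) := by
  unfold F
  refine tsum_congr fun n => ?_
  rw [show (n:ℝ) * (y + Λ/2) / (2*Λ) - (n:ℝ)^2 * 0 / T
        = ((n:ℤ):ℝ) * (1/4) + (n:ℝ) * y / (2*Λ) by push_cast; field_simp; ring,
    e_add, e_zpow, e_quarter]

lemma F_refl' (hΛ0 : Λ ≠ 0) (hodd : ∀ n : ℤ, a (-n) = -a n) :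
    F a Λ T (Λ/2 - y) 0 = -∑' n : ℤ, a n * ((-Complex.I)^n * e ((n:ℝ) * y / (2*Λ))) := by
  unfold F
  rw [← (Equiv.neg ℤ).tsum_eq, ← tsum_neg]
  refine tsum_congr fun n => ?_
  simp only [Equiv.neg_apply]
  rw [hodd n,
    show ((-n:ℤ):ℝ) * (Λ/2 - y) / (2*Λ) - ((-n:ℤ):ℝ)^2 * 0 / T
        = ((n:ℤ):ℝ) * (-(1/4)) + (n:ℝ) * y / (2*Λ) by push_cast; field_simp; ring,
    e_add, e_zpow, e_neg_quarter]
  ring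

lemma F_T2 (hT0 : T ≠ 0) :
    F a Λ T y (T/2) = ∑' n : ℤ, a n * ((-1:ℂ)^n * e ((n:ℝ) * y / (2*Λ))) := by
  unfold F
  refine tsum_congr fun n => ?_
  rw [show (n:ℝ) * y / (2*Λ) - (n:ℝ)^2 * (T/2) / T
        = ((n^2:ℤ):ℝ) * (-(1/2)) + (n:ℝ) * y / (2*Λ) by push_cast; field_simp; ring,
    e_add, e_zpow, e_neg_half, neg_one_zpow_sq]

lemma F_T4 (hT0 : T ≠ 0) :
    F a Λ T y (T/4) = ∑' n : ℤ,
      a n * (((1 - Complex.I)/2 + (1 + Complex.I)/2 * (-1:ℂ)^n) * e ((n:ℝ) * y / (2*Λ))) := by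
  unfold F
  refine tsum_congr fun n => ?_
  rw [show (n:ℝ) * y / (2*Λ) - (n:ℝ)^2 * (T/4) / T
        = -((n:ℝ)^2/4) + (n:ℝ) * y / (2*Λ) by field_simp; ring,
    e_add, term4]

lemma F_T8 (hT0 : T ≠ 0) :
    F a Λ T y (T/8) = ∑' n : ℤ,
      a n * (((1 - Complex.I)/(2*Real.sqrt 2) + (1/2) * Complex.I^n
        - (1 - Complex.I)/(2*Real.sqrt 2) * (-1:ℂ)^n + (1/2) * (-Complex.I)^n)
        * e ((n:ℝ) * y / (2*Λ))) := by
  unfold F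
  refine tsum_congr fun n => ?_
  rw [show (n:ℝ) * y / (2*Λ) - (n:ℝ)^2 * (T/8) / T
        = -((n:ℝ)^2/8) + (n:ℝ) * y / (2*Λ) by field_simp; ring,
    e_add, term8]

end Flemmas

theorem stmt3 (Λ T : ℝ) (hΛ : 0 < Λ) (hT : 0 < T) (a : ℤ → ℂ)
    (ha : Summable fun n : ℤ => ‖a n‖) (hodd : ∀ n : ℤ, a (-n) = -a n) (x : ℝ) :
    F a Λ T x (T / 2) = -F a Λ T (Λ - x) 0 ∧
    F a Λ T x (T / 4) = (1 - Complex.I) / 2 * F a Λ T x 0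
      - (1 + Complex.I) / 2 * F a Λ T (Λ - x) 0 ∧
    F a Λ T x (T / 8) = (1 - Complex.I) / (2 * Real.sqrt 2) * F a Λ T x 0
      + (1 / 2) * F a Λ T (x + Λ / 2) 0
      + (1 - Complex.I) / (2 * Real.sqrt 2) * F a Λ T (Λ - x) 0
      - (1 / 2) * F a Λ T (Λ / 2 - x) 0 := by
  have hΛ0 : Λ ≠ 0 := ne_of_gt hΛ
  have hT0 : T ≠ 0 := ne_of_gt hT
  have key : ∀ (w : ℤ → ℂ), (∀ n, ‖w n‖ = 1) → Summable (fun n : ℤ => a n * w n) := by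
    intro w hw
    refine Summable.of_norm ?_
    simpa [hw] using ha
  have hS0 : Summable (fun n : ℤ => a n * e ((n:ℝ) * x / (2*Λ))) :=
    key _ fun n => e_norm _
  have hS1 : Summable (fun n : ℤ => a n * ((-1:ℂ)^n * e ((n:ℝ) * x / (2*Λ)))) :=
    key _ fun n => by simp [norm_zpow, e_abs]
  have hSi : Summable (fun n : ℤ => a n * (Complex.I^n * e ((n:ℝ) * x / (2*Λ)))) :=
    key _ fun n => by simp [norm_zpow, e_abs]
  have hSmi : Summable (fun n : ℤ => a n * ((-Complex.I)^n * e ((n:ℝ) * x / (2*Λ)))) :=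
    key _ fun n => by simp [norm_zpow, e_abs]
  refine ⟨?_, ?_, ?_⟩
  · rw [F_T2 a Λ T x hT0, F_refl a Λ T x hΛ0 hodd, neg_neg]
  · rw [F_T4 a Λ T x hT0, F_zero a Λ T x, F_refl a Λ T x hΛ0 hodd,
      mul_neg, sub_neg_eq_add, ← tsum_mul_left, ← tsum_mul_left,
      ← Summable.tsum_add (hS0.mul_left ((1 - Complex.I)/2)) (hS1.mul_left ((1 + Complex.I)/2))]
    exact tsum_congr fun n => by ring
  · rw [F_T8 a Λ T x hT0, F_zero a Λ T x, F_shift a Λ T x hΛ0,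
      F_refl a Λ T x hΛ0 hodd, F_refl' a Λ T x hΛ0 hodd,
      mul_neg, mul_neg, sub_neg_eq_add, ← sub_eq_add_neg,
      ← tsum_mul_left, ← tsum_mul_left, ← tsum_mul_left, ← tsum_mul_left,
      ← Summable.tsum_add (hS0.mul_left ((1 - Complex.I)/(2*Real.sqrt 2))) (hSi.mul_left (1/2)),
      ← Summable.tsum_sub ((hS0.mul_left ((1 - Complex.I)/(2*Real.sqrt 2))).add (hSi.mul_left (1/2)))
        (hS1.mul_left ((1 - Complex.I)/(2*Real.sqrt 2))),
      ← Summable.tsum_add (((hS0.mul_left ((1 - Complex.I)/(2*Real.sqrt 2))).add (hSi.mul_left (1/2))).sub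
        (hS1.mul_left ((1 - Complex.I)/(2*Real.sqrt 2)))) (hSmi.mul_left (1/2))]
    exact tsum_congr fun n => by ring
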